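/- On the interval (0, π/2), the functions f1(t) = −sin t·cos t, f2(t) = −(1/16)·(2·sin²t − cos²t)·cos²t, f3(t) = −(1/16)·(2·cos²t − sin²t)·sin²t, F(t) = (3/16)·sin²t·cos²t solve system (F) with μ = 2, satisfy the constraint (C) at every point, and satisfy f1 < 0, F > 0 and F'² − (f2' + f1/4)·(f3' − f1/4) > 0 at every point. (These are, up to sign, the coefficient functions of the homogeneous nearly Kähler structure on ℂP³ = Sp₂/T¹×Sp₁ along a normal geodesic for the SU(2)×SU(2)-action.) -/

import Mathlib

/-- Podestà–Spiro: the coefficient functions (up to sign) of the homogeneous nearly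
Kähler structure on `ℂP³ = Sp₂/T¹×Sp₁` along a normal geodesic solve system (F) with
`μ = 2`, satisfy the constraint (C), and satisfy the positivity conditions on
`(0, π/2)`. -/
theorem stmt_7
    (μ : ℝ) (hμ : μ = 2)
    (f1 f2 f3 F : ℝ → ℝ)
    (hf1 : ∀ t, f1 t = -(Real.sin t * Real.cos t))
    (hf2 : ∀ t, f2 t = -(1 / 16) * (2 * Real.sin t ^ 2 - Real.cos t ^ 2) * Real.cos t ^ 2)
    (hf3 : ∀ t, f3 t = -(1 / 16) * (2 * Real.cos t ^ 2 - Real.sin t ^ 2) * Real.sin t ^ 2)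
    (hF : ∀ t, F t = (3 / 16) * Real.sin t ^ 2 * Real.cos t ^ 2) :
    ∀ t ∈ Set.Ioo 0 (Real.pi / 2),
      (deriv (fun u => (deriv f2 u + f1 u / 4) * f1 u) t + 12 * μ * f1 t * f2 t = 0 ∧
       deriv (fun u => (deriv f3 u - f1 u / 4) * f1 u) t + 12 * μ * f1 t * f3 t = 0 ∧
       deriv (fun u => deriv F u * f1 u) t - 4 * F t / f1 t + 12 * μ * f1 t * F t = 0 ∧
       f1 t * (deriv f2 t - deriv f3 t + f1 t / 2) + 48 * μ * (f2 t * f3 t - F t ^ 2) = 0) ∧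
      4 * F t ^ 2 -
        ((deriv F t) ^ 2 - (deriv f2 t + f1 t / 4) * (deriv f3 t - f1 t / 4)) * f1 t ^ 2 = 0 ∧
      f1 t < 0 ∧
      0 < F t ∧
      0 < (deriv F t) ^ 2 - (deriv f2 t + f1 t / 4) * (deriv f3 t - f1 t / 4) := by
  subst hμ
  have e2 : f2 = fun x => -(1 / 16) * (2 * Real.sin x ^ 2 - Real.cos x ^ 2) * Real.cos x ^ 2 :=
    funext hf2
  have e3 : f3 = fun x => -(1 / 16) * (2 * Real.cos x ^ 2 - Real.sin x ^ 2) * Real.sin x ^ 2 :=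
    funext hf3
  have eF : F = fun x => (3 / 16) * Real.sin x ^ 2 * Real.cos x ^ 2 := funext hF
  -- closed forms for the derivatives
  have hd2 : ∀ u, deriv f2 u
      = -(Real.sin u * Real.cos u) / 4 * (2 * Real.cos u ^ 2 - Real.sin u ^ 2) := by
    intro u
    rw [e2]
    have h := ((((((Real.hasDerivAt_sin u).pow 2).const_mul (2:ℝ)).sub
      ((Real.hasDerivAt_cos u).pow 2)).const_mul (-(1/16):ℝ)).mul ((Real.hasDerivAt_cos u).pow 2))
    erw [h.deriv]; simp only [Pi.pow_apply, Pi.mul_apply, Pi.sub_apply]; push_cast; ring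
  have hd3 : ∀ u, deriv f3 u
      = -(Real.sin u * Real.cos u) / 4 * (Real.cos u ^ 2 - 2 * Real.sin u ^ 2) := by
    intro u
    rw [e3]
    have h := ((((((Real.hasDerivAt_cos u).pow 2).const_mul (2:ℝ)).sub
      ((Real.hasDerivAt_sin u).pow 2)).const_mul (-(1/16):ℝ)).mul ((Real.hasDerivAt_sin u).pow 2))
    erw [h.deriv]; simp only [Pi.pow_apply, Pi.mul_apply, Pi.sub_apply]; push_cast; ring
  have hdF : ∀ u, deriv F u
      = 3 / 8 * (Real.sin u * Real.cos u) * (Real.cos u ^ 2 - Real.sin u ^ 2) := by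
    intro u
    rw [eF]
    have h := ((((Real.hasDerivAt_sin u).pow 2).const_mul ((3:ℝ)/16)).mul
      ((Real.hasDerivAt_cos u).pow 2))
    erw [h.deriv]; simp only [Pi.pow_apply, Pi.mul_apply, Pi.sub_apply]; push_cast; ring
  -- closed forms for the products appearing under the outer derivatives
  have E2 : (fun u => (deriv f2 u + f1 u / 4) * f1 u)
      = fun u => 3 / 4 * (Real.sin u ^ 2 * Real.cos u ^ 4) := by
    funext u
    rw [hd2 u, hf1 u]
    linear_combination (-(Real.sin u ^ 2 * Real.cos u ^ 2) / 4) * Real.sin_sq_add_cos_sq u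
  have E3 : (fun u => (deriv f3 u - f1 u / 4) * f1 u)
      = fun u => -(3 / 4) * (Real.sin u ^ 4 * Real.cos u ^ 2) := by
    funext u
    rw [hd3 u, hf1 u]
    linear_combination (Real.sin u ^ 2 * Real.cos u ^ 2 / 4) * Real.sin_sq_add_cos_sq u
  have EG : (fun u => deriv F u * f1 u)
      = fun u => -(3 / 8) * (Real.sin u ^ 2 * Real.cos u ^ 2) *
          (Real.cos u ^ 2 - Real.sin u ^ 2) := by
    funext u
    rw [hdF u, hf1 u]
    ring
  intro t ht
  obtain ⟨ht0, htp⟩ := ht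
  have hpi := Real.pi_pos
  have hs : 0 < Real.sin t := Real.sin_pos_of_pos_of_lt_pi ht0 (by linarith)
  have hc : 0 < Real.cos t := Real.cos_pos_of_mem_Ioo ⟨by linarith, htp⟩
  have hpy := Real.sin_sq_add_cos_sq t
  have hne : f1 t ≠ 0 := by rw [hf1 t]; exact ne_of_lt (by nlinarith [mul_pos hs hc])
  refine ⟨⟨?_, ?_, ?_, ?_⟩, ?_, ?_, ?_, ?_⟩
  · -- equation 1
    rw [E2]
    have h := (((Real.hasDerivAt_sin t).pow 2).mul ((Real.hasDerivAt_cos t).pow 4)).const_mul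
      ((3:ℝ)/4)
    erw [h.deriv]; simp only [Pi.pow_apply, Pi.mul_apply, Pi.sub_apply]
    rw [hf1 t, hf2 t]
    push_cast; ring
  · -- equation 2
    rw [E3]
    have h := (((Real.hasDerivAt_sin t).pow 4).mul ((Real.hasDerivAt_cos t).pow 2)).const_mul
      ((-(3/4)):ℝ)
    erw [h.deriv]; simp only [Pi.pow_apply, Pi.mul_apply, Pi.sub_apply]
    rw [hf1 t, hf3 t]
    push_cast; ring
  · -- equation 3
    rw [EG]
    have h := (((((Real.hasDerivAt_sin t).pow 2).mul ((Real.hasDerivAt_cos t).pow 2)).const_mul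
      ((-(3/8)):ℝ)).mul (((Real.hasDerivAt_cos t).pow 2).sub ((Real.hasDerivAt_sin t).pow 2)))
    erw [h.deriv]; simp only [Pi.pow_apply, Pi.mul_apply, Pi.sub_apply]
    have hdiv : 4 * F t / f1 t = -(3 / 4) * (Real.sin t * Real.cos t) := by
      rw [hF t, hf1 t, div_eq_iff (by rw [hf1 t] at hne; exact hne)]
      ring
    rw [hdiv, hf1 t, hF t]
    push_cast
    linear_combination (-(3/4) * Real.sin t * Real.cos t *
      (Real.sin t ^ 2 + Real.cos t ^ 2 + 1)) * hpy
  · -- equation 4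
    rw [hd2 t, hd3 t, hf1 t, hf2 t, hf3 t, hF t]
    linear_combination (-(Real.sin t ^ 2 * Real.cos t ^ 2 / 4) *
      (3 * (Real.sin t ^ 2 + Real.cos t ^ 2) + 2)) * hpy
  · -- constraint (C)
    rw [hd2 t, hd3 t, hdF t, hf1 t, hF t]
    linear_combination (-(Real.sin t ^ 4 * Real.cos t ^ 4) / 64 *
      (Real.sin t ^ 2 + Real.cos t ^ 2 + 5)) * hpy
  · rw [hf1 t]; nlinarith [mul_pos hs hc]
  · rw [hF t]; positivity
  · rw [hd2 t, hd3 t, hdF t, hf1 t]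
    nlinarith [mul_pos hs hc, hpy, sq_nonneg (Real.sin t * Real.cos t)]
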